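/- The collection I_IP of subsets of ℕ that are not IP-sets forms a proper ideal on ℕ: it is closed under subsets, closed under finite unions, and does not contain ℕ. -/

import Mathlib

open Set Filter

/-- `A` contains arithmetic progressions of all finite lengths. -/
def IsAPSet (A : Set ℕ) : Prop :=
  ∀ k : ℕ, ∃ a d : ℕ, 0 < d ∧ ∀ i < k, a + i * d ∈ A

/-- The set of finite sums of distinct elements of `B`. -/
def FS (B : Set ℕ) : Set ℕ :=
  {n | ∃ F : Finset ℕ, F.Nonempty ∧ ↑F ⊆ B ∧ n = ∑ i ∈ F, i}

/-- `S` is an IP-set: it contains `FS B` for some infinite `B`. -/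
def IsIPSet (S : Set ℕ) : Prop :=
  ∃ B : Set ℕ, B.Infinite ∧ FS B ⊆ S

/-- `f` is finite-to-one on `C`. -/
def FinToOneOn (f : ℕ → ℕ) (C : Set ℕ) : Prop :=
  ∀ m : ℕ, (C ∩ f ⁻¹' {m}).Finite

/-- Every element of `Hindman.FS a` is a sum of entries of `a` over a nonempty finite
index set. -/
lemma exists_finset_of_mem_hindmanFS {a : Stream' ℕ} {m : ℕ} (h : m ∈ Hindman.FS a) :
    ∃ F : Finset ℕ, F.Nonempty ∧ m = ∑ i ∈ F, a.get i := by
  induction h with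
  | head' a => exact ⟨{0}, Finset.singleton_nonempty 0, by simp [Stream'.head]⟩
  | tail' a m _ ih =>
      obtain ⟨F, hF, rfl⟩ := ih
      refine ⟨F.image (· + 1), hF.image _, ?_⟩
      rw [Finset.sum_image (by intro x _ y _ h; beta_reduce at h; omega)]
      simp
  | cons' a m _ ih =>
      obtain ⟨F, hF, rfl⟩ := ih
      refine ⟨insert 0 (F.image (· + 1)), Finset.insert_nonempty _ _, ?_⟩
      rw [Finset.sum_insert (by simp), Finset.sum_image (by intro x _ y _ h; beta_reduce at h; omega)]
      simp [Stream'.head]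

/-- The collection of non-IP subsets of ℕ is a proper ideal: closed under
subsets and finite unions, and does not contain ℕ. -/
theorem IIP_proper_ideal :
    (∀ A B : Set ℕ, ¬ IsIPSet B → A ⊆ B → ¬ IsIPSet A) ∧
    (∀ A B : Set ℕ, ¬ IsIPSet A → ¬ IsIPSet B → ¬ IsIPSet (A ∪ B)) ∧
    IsIPSet (Set.univ : Set ℕ) := by
  refine ⟨?_, ?_, ⟨Set.univ, Set.infinite_univ, Set.subset_univ _⟩⟩
  · rintro A B hB hAB ⟨C, hC, hFS⟩
    exact hB ⟨C, hC, fun x hx => hAB (hFS hx)⟩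
  · rintro A B hA hB ⟨C, hCinf, hCFS⟩
    -- remove 0 from C
    set C' : Set ℕ := C \ {0} with hC'
    have hC'inf : C'.Infinite := hCinf.diff (Set.finite_singleton 0)
    have hC'sub : FS C' ⊆ A ∪ B := by
      rintro x ⟨F, hF, hFC, rfl⟩
      exact hCFS ⟨F, hF, fun y hy => (hFC hy).1, rfl⟩
    have hC'pos : ∀ x ∈ FS C', 0 < x := by
      rintro x ⟨F, hF, hFC, rfl⟩
      exact Finset.sum_pos (fun i hi => Nat.pos_of_ne_zero (hFC hi).2) hF
    -- the stream enumerating C'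
    set a : Stream' ℕ := fun n => Nat.nth (· ∈ C') n with ha
    have haFS : Hindman.FS a ⊆ FS C' := by
      intro m hm
      obtain ⟨F, hF, rfl⟩ := exists_finset_of_mem_hindmanFS hm
      have hinj : ∀ x ∈ F, ∀ y ∈ F, a.get x = a.get y → x = y := by
        intro x _ y _ h
        exact (Nat.nth_injective hC'inf) h
      refine ⟨F.image (fun i => a.get i), hF.image _, ?_, ?_⟩
      · intro y hy
        simp only [Finset.coe_image, Set.mem_image, Finset.mem_coe] at hy
        obtain ⟨i, _, rfl⟩ := hy
        exact Nat.nth_mem_of_infinite hC'inf i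
      · rw [Finset.sum_image hinj]
    -- apply Hindman's theorem to the cover {A ∩ FS a, B ∩ FS a}
    obtain ⟨c, hc, b, hb⟩ := Hindman.FS_partition_regular a
      {A ∩ Hindman.FS a, B ∩ Hindman.FS a}
      (Set.Finite.insert _ (Set.finite_singleton _))
      (by
        intro x hx
        rcases hC'sub (haFS hx) with h | h
        · exact ⟨A ∩ Hindman.FS a, Or.inl rfl, h, hx⟩
        · exact ⟨B ∩ Hindman.FS a, Or.inr rfl, h, hx⟩)
    have hbFSa : Hindman.FS b ⊆ Hindman.FS a := by
      rcases hc with rfl | rfl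
      · exact fun x hx => (hb hx).2
      · exact fun x hx => (hb hx).2
    have hbpos : ∀ i, 1 ≤ b.get i := fun i =>
      hC'pos _ (haFS (hbFSa (Hindman.FS.singleton b i)))
    -- block construction
    set k : ℕ → ℕ := fun n => ∑ i ∈ Finset.range n, (i + 1) with hk
    have hksucc : ∀ n, k (n + 1) = k n + (n + 1) := fun n => Finset.sum_range_succ _ n
    have hkmono : StrictMono k := strictMono_nat_of_lt_succ (fun n => by rw [hksucc]; omega)
    set d : ℕ → ℕ := fun n => ∑ i ∈ Finset.Ico (k n) (k (n + 1)), b.get i with hd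
    have hdge : ∀ n, n + 1 ≤ d n := by
      intro n
      have hcard : (Finset.Ico (k n) (k (n + 1))).card = n + 1 := by
        rw [Nat.card_Ico, hksucc]; omega
      calc n + 1 = (Finset.Ico (k n) (k (n + 1))).card * 1 := by omega
        _ ≤ ∑ i ∈ Finset.Ico (k n) (k (n + 1)), b.get i :=
            Finset.sum_le_sum (fun i _ => hbpos i) |>.trans_eq' (by
              rw [Finset.sum_const, smul_eq_mul])
        _ = d n := rfl
    have hDinf : (Set.range d).Infinite := by
      intro hfin
      obtain ⟨M, hM⟩ := hfin.bddAbove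
      have := hM (Set.mem_range_self M)
      have := hdge M
      omega
    have hDFS : FS (Set.range d) ⊆ Hindman.FS b := by
      rintro x ⟨F, hF, hFD, rfl⟩
      classical
      set g : ℕ → ℕ := fun x => if h : x ∈ Set.range d then h.choose else 0 with hg
      have hgd : ∀ x ∈ Set.range d, d (g x) = x := by
        intro x hx
        simp only [hg, dif_pos hx]
        exact hx.choose_spec
      have hinj : ∀ x ∈ F, ∀ y ∈ F, g x = g y → x = y := by
        intro x hx y hy h
        rw [← hgd x (hFD hx), ← hgd y (hFD hy), h]
      have hsum : ∑ i ∈ F, i = ∑ n ∈ F.image g, d n := by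
        rw [Finset.sum_image hinj]
        exact Finset.sum_congr rfl (fun x hx => (hgd x (hFD hx)).symm)
      have hdisj : (↑(F.image g) : Set ℕ).PairwiseDisjoint
          (fun n => Finset.Ico (k n) (k (n + 1))) := by
        intro i _ j _ hij
        simp only [Function.onFun, Finset.disjoint_left]
        intro x hx hx'
        simp only [Finset.mem_Ico] at hx hx'
        rcases lt_or_gt_of_ne hij with h | h
        · have := hkmono.le_iff_le.mpr (show i + 1 ≤ j by omega)
          omega
        · have := hkmono.le_iff_le.mpr (show j + 1 ≤ i by omega)
          omega
      rw [hsum, ← Finset.sum_biUnion hdisj]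
      apply Hindman.FS.finset_sum
      obtain ⟨n, hn⟩ := hF.image g
      exact ⟨k n, Finset.mem_biUnion.mpr ⟨n, hn, Finset.mem_Ico.mpr ⟨le_refl _,
        by rw [hksucc]; omega⟩⟩⟩
    rcases hc with rfl | rfl
    · exact hA ⟨Set.range d, hDinf, fun x hx => (hb (hDFS hx)).1⟩
    · exact hB ⟨Set.range d, hDinf, fun x hx => (hb (hDFS hx)).1⟩
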